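/- Let K and L be nonempty compact convex subsets of ℝ². Suppose that for every triangle Δ in ℝ² (the convex hull of three affinely independent points), vol(K + Δ) − vol(K) − vol(Δ) = vol(L + Δ) − vol(L) − vol(Δ). Then K and L are translates: there exists x ∈ ℝ² with L = K + {x}. -/

import Mathlib

open MeasureTheory Pointwise
open scoped ENNReal
noncomputable section
local notation "E2" => EuclideanSpace ℝ (Fin 2)


def hsup (X : Set E2) (v : E2) : ℝ := sSup ((fun x => (inner ℝ x v : ℝ)) '' X)

lemma inner_cont (v : E2) : Continuous (fun x : E2 => (inner ℝ x v : ℝ)) :=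
  Continuous.inner continuous_id continuous_const

lemma hsup_isGreatest {X : Set E2} (hX : IsCompact X) (hne : X.Nonempty) (v : E2) :
    IsGreatest ((fun x => (inner ℝ x v : ℝ)) '' X) (hsup X v) := by
  have hc : IsCompact ((fun x => (inner ℝ x v : ℝ)) '' X) := hX.image (inner_cont v)
  exact ⟨hc.sSup_mem (hne.image _), fun y hy => le_csSup hc.bddAbove hy⟩

lemma le_hsup {X : Set E2} (hX : IsCompact X) (hne : X.Nonempty) {x : E2} (hx : x ∈ X) (v : E2) :
    (inner ℝ x v : ℝ) ≤ hsup X v :=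
  (hsup_isGreatest hX hne v).2 ⟨x, hx, rfl⟩

lemma hsup_attained {X : Set E2} (hX : IsCompact X) (hne : X.Nonempty) (v : E2) :
    ∃ x ∈ X, (inner ℝ x v : ℝ) = hsup X v := by
  obtain ⟨x, hx, hx2⟩ := (hsup_isGreatest hX hne v).1
  exact ⟨x, hx, hx2⟩

lemma hsup_smul {X : Set E2} (hX : IsCompact X) (hne : X.Nonempty) (v : E2) {t : ℝ} (ht : 0 ≤ t) :
    hsup X (t • v) = t * hsup X v := by
  obtain ⟨x, hx, hx2⟩ := hsup_attained hX hne v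
  obtain ⟨y, hy, hy2⟩ := hsup_attained hX hne (t • v)
  have h1 : (inner ℝ y (t • v) : ℝ) = t * inner ℝ y v := real_inner_smul_right y v t
  have h2 : (inner ℝ x (t • v) : ℝ) = t * inner ℝ x v := real_inner_smul_right x v t
  have := le_hsup hX hne hx (t • v)
  have h4 := le_hsup hX hne hy v
  nlinarith [mul_le_mul_of_nonneg_left h4 ht]

lemma hsup_zero {X : Set E2} (hX : IsCompact X) (hne : X.Nonempty) : hsup X 0 = 0 := by
  obtain ⟨x, hx, hx2⟩ := hsup_attained hX hne 0
  rw [← hx2, inner_zero_right]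

lemma hsup_translate {X : Set E2} (hX : IsCompact X) (hne : X.Nonempty) (c v : E2) :
    hsup (X + {c}) v = hsup X v + inner ℝ c v := by
  obtain ⟨x, hx, hx2⟩ := hsup_attained hX hne v
  have hXc : IsCompact (X + {c}) := hX.add isCompact_singleton
  have hnec : (X + {c}).Nonempty := hne.add (Set.singleton_nonempty c)
  obtain ⟨y, hy, hy2⟩ := hsup_attained hXc hnec v
  obtain ⟨y', hy', c', hc', rfl⟩ := hy
  rw [Set.mem_singleton_iff] at hc'
  rw [hc'] at hy2
  have h1 : (inner ℝ (y' + c) v : ℝ) = inner ℝ y' v + inner ℝ c v := inner_add_left y' c v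
  have h2 : x + c ∈ X + {c} := Set.add_mem_add hx rfl
  have h3 := le_hsup hXc hnec h2 v
  have h4 : (inner ℝ (x + c) v : ℝ) = inner ℝ x v + inner ℝ c v := inner_add_left x c v
  have h5 := le_hsup hX hne hy' v
  linarith

/-- set equality from support functions -/
lemma subset_of_hsup_le {A B : Set E2} (hA : IsCompact A) (hAne : A.Nonempty)
    (hB : IsCompact B) (hBc : Convex ℝ B) (hBne : B.Nonempty)
    (hle : ∀ v, hsup A v ≤ hsup B v) : A ⊆ B := by
  intro z hz
  by_contra hzB
  obtain ⟨f, u, hfB, hfz⟩ := geometric_hahn_banach_closed_point hBc hB.isClosed hzB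
  set v : E2 := (InnerProductSpace.toDual ℝ E2).symm f with hv
  have hfv : ∀ y : E2, f y = inner ℝ v y := by
    intro y
    have := InnerProductSpace.toDual_symm_apply (𝕜 := ℝ) (E := E2) (x := y) (y := f)
    rw [← this]
  have h1 : hsup B v ≤ u := by
    obtain ⟨b, hb, hb2⟩ := hsup_attained hB hBne v
    rw [← hb2, real_inner_comm, ← hfv]
    exact le_of_lt (hfB b hb)
  have h2 : (inner ℝ z v : ℝ) ≤ hsup A v := le_hsup hA hAne hz v
  rw [real_inner_comm, ← hfv] at h2
  have := hle v
  linarith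

lemma inner_formula (x y : E2) : (inner ℝ x y : ℝ) = x 0 * y 0 + x 1 * y 1 := by
  rw [PiLp.inner_apply, Fin.sum_univ_two]; simp [RCLike.inner_apply]; ring

section Geometry
variable (a b : E2)

/-- determinant -/
def Dt : ℝ := a 0 * b 1 - a 1 * b 0

def pp1 : E2 := !₂[b 1 / Dt a b, -(b 0) / Dt a b]
def pp2 : E2 := !₂[-(a 1) / Dt a b, a 0 / Dt a b]

variable (hD : Dt a b ≠ 0)
include hD

lemma ip1a : (inner ℝ (pp1 a b) a : ℝ) = 1 := by
  have hD' : a 0 * b 1 - a 1 * b 0 ≠ 0 := hD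
  rw [inner_formula]; show b 1 / Dt a b * a 0 + -(b 0)/ Dt a b * a 1 = 1
  unfold Dt; rw [div_mul_eq_mul_div, div_mul_eq_mul_div, ← add_div, div_eq_iff hD']; ring

lemma ip1b : (inner ℝ (pp1 a b) b : ℝ) = 0 := by
  have hD' : a 0 * b 1 - a 1 * b 0 ≠ 0 := hD
  rw [inner_formula]; show b 1 / Dt a b * b 0 + -(b 0)/ Dt a b * b 1 = 0
  unfold Dt; field_simp; ring

lemma ip2a : (inner ℝ (pp2 a b) a : ℝ) = 0 := by
  have hD' : a 0 * b 1 - a 1 * b 0 ≠ 0 := hD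
  rw [inner_formula]; show -(a 1) / Dt a b * a 0 + a 0 / Dt a b * a 1 = 0
  unfold Dt; field_simp; ring

lemma ip2b : (inner ℝ (pp2 a b) b : ℝ) = 1 := by
  have hD' : a 0 * b 1 - a 1 * b 0 ≠ 0 := hD
  rw [inner_formula]; show -(a 1) / Dt a b * b 0 + a 0 / Dt a b * b 1 = 1
  unfold Dt; field_simp; ring

lemma eq_of_inner {u v : E2} (ha : (inner ℝ u a : ℝ) = inner ℝ v a) (hb : (inner ℝ u b : ℝ) = inner ℝ v b) :
    u = v := by
  rw [inner_formula, inner_formula] at ha hb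
  have hDt : Dt a b ≠ 0 := hD
  unfold Dt at hDt
  ext i
  fin_cases i
  · show u 0 = v 0
    have h1 : (u 0 - v 0) * (a 0 * b 1 - a 1 * b 0) = 0 := by linear_combination b 1 * ha - a 1 * hb
    rcases mul_eq_zero.1 h1 with h | h
    · linarith
    · exact absurd h hDt
  · show u 1 = v 1
    have h1 : (u 1 - v 1) * (a 0 * b 1 - a 1 * b 0) = 0 := by linear_combination a 0 * hb - b 0 * ha
    rcases mul_eq_zero.1 h1 with h | h
    · linarith
    · exact absurd h hDt


omit hD

/-- The model triangle region -/
def Tset (H1 H2 H3 : ℝ) : Set E2 :=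
  {z | (inner ℝ z a : ℝ) ≤ H1 ∧ (inner ℝ z b : ℝ) ≤ H2 ∧ -H3 ≤ (inner ℝ z a : ℝ) + inner ℝ z b}

def Dl0 : Set E2 := convexHull ℝ {pp1 a b, pp2 a b, pp1 a b + pp2 a b}

lemma Tset_convex (H1 H2 H3 : ℝ) : Convex ℝ (Tset a b H1 H2 H3) := by
  intro x hx y hy α β hα hβ hαβ
  obtain ⟨hx1, hx2, hx3⟩ := hx
  obtain ⟨hy1, hy2, hy3⟩ := hy
  have e1 : (inner ℝ (α • x + β • y) a : ℝ) = α * inner ℝ x a + β * inner ℝ y a := by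
    rw [inner_add_left, real_inner_smul_left, real_inner_smul_left]
  have e2 : (inner ℝ (α • x + β • y) b : ℝ) = α * inner ℝ x b + β * inner ℝ y b := by
    rw [inner_add_left, real_inner_smul_left, real_inner_smul_left]
  have c1 : α * H1 + β * H1 = H1 := by rw [← add_mul, hαβ, one_mul]
  have c2 : α * H2 + β * H2 = H2 := by rw [← add_mul, hαβ, one_mul]
  have c3 : α * (-H3) + β * (-H3) = -H3 := by rw [← add_mul, hαβ, one_mul]
  refine ⟨?_, ?_, ?_⟩
  · rw [e1]
    linarith [mul_le_mul_of_nonneg_left hx1 hα, mul_le_mul_of_nonneg_left hy1 hβ]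
  · rw [e2]
    linarith [mul_le_mul_of_nonneg_left hx2 hα, mul_le_mul_of_nonneg_left hy2 hβ]
  · rw [e1, e2]
    linarith [mul_le_mul_of_nonneg_left hx3 hα, mul_le_mul_of_nonneg_left hy3 hβ]

lemma combo_mem (p q : E2) (y0 y1 : ℝ) (h0 : y0 ≤ 1) (h1 : y1 ≤ 1) (h2 : 1 ≤ y0 + y1) :
    y0 • p + y1 • q ∈ convexHull ℝ ({p, q, p + q} : Set E2) := by
  have hconv : Convex ℝ (convexHull ℝ ({p, q, p + q} : Set E2)) := convex_convexHull ℝ _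
  have hp : p ∈ convexHull ℝ ({p, q, p + q} : Set E2) :=
    subset_convexHull ℝ _ (by left; rfl)
  have hq : q ∈ convexHull ℝ ({p, q, p + q} : Set E2) :=
    subset_convexHull ℝ _ (by right; left; rfl)
  have hpq : p + q ∈ convexHull ℝ ({p, q, p + q} : Set E2) :=
    subset_convexHull ℝ _ (by right; right; rfl)
  by_cases hγ : y0 + y1 - 1 = 0
  · exact hconv hp hq (by linarith) (by linarith) (by linarith)
  · have hγpos : 0 < y0 + y1 - 1 := lt_of_le_of_ne (by linarith) (Ne.symm hγ)
    by_cases hγ1 : y0 + y1 - 1 = 1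
    · have hy0' : y0 = 1 := by linarith
      have hy1' : y1 = 1 := by linarith
      rw [hy0', hy1', one_smul, one_smul]
      exact hpq
    · have hγlt : y0 + y1 - 1 < 1 := by
        rcases lt_or_gt_of_ne hγ1 with hlt | hgt
        · exact hlt
        · linarith
      have h1γ : (0:ℝ) < 1 - (y0 + y1 - 1) := by linarith
      have hmmem : ((1-y1)/(1-(y0+y1-1))) • p + ((1-y0)/(1-(y0+y1-1))) • q
          ∈ convexHull ℝ ({p, q, p + q} : Set E2) := by
        apply hconv hp hq
        · exact div_nonneg (by linarith) (by linarith)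
        · exact div_nonneg (by linarith) (by linarith)
        · rw [← add_div, div_eq_one_iff_eq (ne_of_gt h1γ)]
          ring
      have key := hconv hmmem hpq (le_of_lt h1γ) (le_of_lt hγpos) (by ring)
      have e1 : (1-(y0+y1-1)) * ((1-y1)/(1-(y0+y1-1))) = 1-y1 := by field_simp
      have e2 : (1-(y0+y1-1)) * ((1-y0)/(1-(y0+y1-1))) = 1-y0 := by field_simp
      have hzeq : (1-(y0+y1-1)) • (((1-y1)/(1-(y0+y1-1))) • p + ((1-y0)/(1-(y0+y1-1))) • q)
          + (y0+y1-1) • (p + q) = y0 • p + y1 • q := by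
        rw [smul_add, smul_smul, smul_smul, e1, e2]
        module
      rw [hzeq] at key
      exact key

include hD in
lemma Dl0_eq_Tset : Dl0 a b = Tset a b 1 1 (-1) := by
  have h1a := ip1a a b hD; have h1b := ip1b a b hD
  have h2a := ip2a a b hD; have h2b := ip2b a b hD
  apply Set.Subset.antisymm
  · apply convexHull_min _ (Tset_convex a b 1 1 (-1))
    intro z hz
    rcases hz with rfl | rfl | rfl
    · refine ⟨by rw [h1a], by rw [h1b]; norm_num, ?_⟩
      rw [h1a, h1b]; norm_num
    · refine ⟨by rw [h2a]; norm_num, by rw [h2b], ?_⟩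
      rw [h2a, h2b]; norm_num
    · refine ⟨?_, ?_, ?_⟩
      · rw [inner_add_left, h1a, h2a]; norm_num
      · rw [inner_add_left, h1b, h2b]; norm_num
      · rw [inner_add_left, inner_add_left, h1a, h2a, h1b, h2b]; norm_num
  · intro z hz
    obtain ⟨hz1, hz2, hz3⟩ := hz
    have hzeq : z = (inner ℝ z a : ℝ) • pp1 a b + (inner ℝ z b : ℝ) • pp2 a b := by
      apply eq_of_inner a b hD
      · rw [inner_add_left, real_inner_smul_left, real_inner_smul_left, h1a, h2a]; ring
      · rw [inner_add_left, real_inner_smul_left, real_inner_smul_left, h1b, h2b]; ring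
    have hz3' : (1:ℝ) ≤ (inner ℝ z a : ℝ) + inner ℝ z b := by linarith
    rw [hzeq]
    exact combo_mem (pp1 a b) (pp2 a b) _ _ hz1 hz2 hz3'


lemma Tset_smul {t : ℝ} (ht : 0 < t) : t • Tset a b 1 1 (-1) = Tset a b t t (-t) := by
  have key1 : ∀ x : ℝ, t⁻¹ * x ≤ 1 → x ≤ t := by
    intro x hx
    have e : t * (t⁻¹ * x) = x := by field_simp
    have := mul_le_mul_of_nonneg_left hx (le_of_lt ht)
    rw [mul_one] at this
    linarith
  have key2 : ∀ x : ℝ, (1:ℝ) ≤ t⁻¹ * x → t ≤ x := by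
    intro x hx
    have e : t * (t⁻¹ * x) = x := by field_simp
    have := mul_le_mul_of_nonneg_left hx (le_of_lt ht)
    rw [mul_one] at this
    linarith
  have key3 : ∀ x : ℝ, x ≤ t → t⁻¹ * x ≤ 1 := by
    intro x hx
    have e : t⁻¹ * t = 1 := inv_mul_cancel₀ (ne_of_gt ht)
    have := mul_le_mul_of_nonneg_left hx (le_of_lt (by positivity : (0:ℝ) < t⁻¹))
    linarith
  have key4 : ∀ x : ℝ, t ≤ x → (1:ℝ) ≤ t⁻¹ * x := by
    intro x hx
    have e : t⁻¹ * t = 1 := inv_mul_cancel₀ (ne_of_gt ht)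
    have := mul_le_mul_of_nonneg_left hx (le_of_lt (by positivity : (0:ℝ) < t⁻¹))
    linarith
  ext z
  rw [Set.mem_smul_set_iff_inv_smul_mem₀ (ne_of_gt ht)]
  have e1 : (inner ℝ (t⁻¹ • z) a : ℝ) = t⁻¹ * inner ℝ z a := real_inner_smul_left _ _ _
  have e2 : (inner ℝ (t⁻¹ • z) b : ℝ) = t⁻¹ * inner ℝ z b := real_inner_smul_left _ _ _
  constructor
  · rintro ⟨h1, h2, h3⟩
    rw [e1] at h1; rw [e2] at h2; rw [e1, e2] at h3
    refine ⟨key1 _ h1, key1 _ h2, ?_⟩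
    have h3' : (1:ℝ) ≤ t⁻¹ * ((inner ℝ z a : ℝ) + inner ℝ z b) := by
      rw [mul_add]; linarith
    have := key2 _ h3'
    linarith
  · rintro ⟨h1, h2, h3⟩
    have h3' : t ≤ (inner ℝ z a : ℝ) + inner ℝ z b := by linarith
    refine ⟨?_, ?_, ?_⟩
    · rw [e1]; exact key3 _ h1
    · rw [e2]; exact key3 _ h2
    · rw [e1, e2]
      have := key4 _ h3'
      rw [mul_add] at this
      linarith

include hD in
lemma Tset_translate (H1 H2 H3 : ℝ) :
    Tset a b H1 H2 H3 =
      ((H1 - (H1+H2+H3)) • pp1 a b + (H2 - (H1+H2+H3)) • pp2 a b) +ᵥ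
        Tset a b (H1+H2+H3) (H1+H2+H3) (-(H1+H2+H3)) := by
  have h1a := ip1a a b hD; have h1b := ip1b a b hD
  have h2a := ip2a a b hD; have h2b := ip2b a b hD
  set v : E2 := (H1 - (H1+H2+H3)) • pp1 a b + (H2 - (H1+H2+H3)) • pp2 a b with hv
  have hva : (inner ℝ v a : ℝ) = H1 - (H1+H2+H3) := by
    rw [hv, inner_add_left, real_inner_smul_left, real_inner_smul_left, h1a, h2a]; ring
  have hvb : (inner ℝ v b : ℝ) = H2 - (H1+H2+H3) := by
    rw [hv, inner_add_left, real_inner_smul_left, real_inner_smul_left, h1b, h2b]; ring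
  ext z
  constructor
  · rintro ⟨hz1, hz2, hz3⟩
    refine ⟨z - v, ⟨?_, ?_, ?_⟩, ?_⟩
    · rw [inner_sub_left, hva]; linarith
    · rw [inner_sub_left, hvb]; linarith
    · rw [inner_sub_left, inner_sub_left, hva, hvb]; linarith
    · show v + (z - v) = z
      abel
  · rintro ⟨w, ⟨hw1, hw2, hw3⟩, rfl⟩
    have ea : (inner ℝ (v + w) a : ℝ) = inner ℝ v a + inner ℝ w a := inner_add_left _ _ _
    have eb : (inner ℝ (v + w) b : ℝ) = inner ℝ v b + inner ℝ w b := inner_add_left _ _ _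
    simp only [vadd_eq_add]
    refine ⟨?_, ?_, ?_⟩
    · rw [ea, hva]; linarith
    · rw [eb, hvb]; linarith
    · rw [ea, eb, hva, hvb]; linarith

include hD in
lemma vol_Tset (H1 H2 H3 : ℝ) (hσ : 0 < H1+H2+H3) :
    volume (Tset a b H1 H2 H3) = ENNReal.ofReal ((H1+H2+H3)^2) * volume (Dl0 a b) := by
  rw [Tset_translate a b hD H1 H2 H3, ← Tset_smul a b hσ, measure_vadd,
    Measure.addHaar_smul, Dl0_eq_Tset a b hD, finrank_euclideanSpace_fin]
  congr 1
  rw [abs_of_nonneg (by positivity : (0:ℝ) ≤ (H1+H2+H3)^2)]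

include hD in
lemma affInd {t : ℝ} (ht : t ≠ 0) :
    AffineIndependent ℝ ![t • pp1 a b, t • pp2 a b, t • (pp1 a b + pp2 a b)] := by
  have h1a := ip1a a b hD; have h1b := ip1b a b hD
  have h2a := ip2a a b hD; have h2b := ip2b a b hD
  rw [affineIndependent_iff_not_collinear]
  intro hcol
  rw [collinear_iff_exists_forall_eq_smul_vadd] at hcol
  obtain ⟨p0, v, hv⟩ := hcol
  obtain ⟨r1, hr1⟩ := hv (t • pp1 a b) ⟨0, rfl⟩
  obtain ⟨r2, hr2⟩ := hv (t • pp2 a b) ⟨1, rfl⟩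
  obtain ⟨r3, hr3⟩ := hv (t • (pp1 a b + pp2 a b)) ⟨2, rfl⟩
  have ha1 : t = r1 * (inner ℝ v a : ℝ) + inner ℝ p0 a := by
    have h : (inner ℝ (t • pp1 a b) a : ℝ) = inner ℝ (r1 • v + p0) a := by
      rw [hr1, vadd_eq_add]
    rw [real_inner_smul_left, h1a, inner_add_left, real_inner_smul_left, mul_one] at h
    exact h
  have ha2 : (0:ℝ) = r2 * (inner ℝ v a : ℝ) + inner ℝ p0 a := by
    have h : (inner ℝ (t • pp2 a b) a : ℝ) = inner ℝ (r2 • v + p0) a := by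
      rw [hr2, vadd_eq_add]
    rw [real_inner_smul_left, h2a, inner_add_left, real_inner_smul_left, mul_zero] at h
    exact h
  have ha3 : t = r3 * (inner ℝ v a : ℝ) + inner ℝ p0 a := by
    have h : (inner ℝ (t • (pp1 a b + pp2 a b)) a : ℝ) = inner ℝ (r3 • v + p0) a := by
      rw [hr3, vadd_eq_add]
    rw [real_inner_smul_left, inner_add_left, h1a, h2a, inner_add_left,
      real_inner_smul_left] at h
    rw [show t * (1 + 0) = t from by ring] at h
    exact h
  have hb1 : (0:ℝ) = r1 * (inner ℝ v b : ℝ) + inner ℝ p0 b := by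
    have h : (inner ℝ (t • pp1 a b) b : ℝ) = inner ℝ (r1 • v + p0) b := by
      rw [hr1, vadd_eq_add]
    rw [real_inner_smul_left, h1b, inner_add_left, real_inner_smul_left, mul_zero] at h
    exact h
  have hb2 : t = r2 * (inner ℝ v b : ℝ) + inner ℝ p0 b := by
    have h : (inner ℝ (t • pp2 a b) b : ℝ) = inner ℝ (r2 • v + p0) b := by
      rw [hr2, vadd_eq_add]
    rw [real_inner_smul_left, h2b, inner_add_left, real_inner_smul_left, mul_one] at h
    exact h
  have hb3 : t = r3 * (inner ℝ v b : ℝ) + inner ℝ p0 b := by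
    have h : (inner ℝ (t • (pp1 a b + pp2 a b)) b : ℝ) = inner ℝ (r3 • v + p0) b := by
      rw [hr3, vadd_eq_add]
    rw [real_inner_smul_left, inner_add_left, h1b, h2b, inner_add_left,
      real_inner_smul_left] at h
    rw [show t * (0 + 1) = t from by ring] at h
    exact h
  have e12 : (r1 - r2) * (inner ℝ v a : ℝ) = t := by linear_combination ha2 - ha1
  have e13 : (r1 - r3) * (inner ℝ v a : ℝ) = 0 := by linear_combination ha3 - ha1
  have e45 : (r1 - r2) * (inner ℝ v b : ℝ) = -t := by linear_combination hb2 - hb1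
  have e23' : (r2 - r3) * (inner ℝ v b : ℝ) = 0 := by linear_combination hb3 - hb2
  have hiva : (inner ℝ v a : ℝ) ≠ 0 := by
    intro h0; rw [h0, mul_zero] at e12; exact ht (e12.symm)
  have hivb : (inner ℝ v b : ℝ) ≠ 0 := by
    intro h0; rw [h0, mul_zero] at e45
    exact ht (by linarith)
  have hr13 : r1 = r3 := by
    rcases mul_eq_zero.1 e13 with h | h
    · linarith
    · exact absurd h hiva
  have hr23 : r2 = r3 := by
    rcases mul_eq_zero.1 e23' with h | h
    · linarith
    · exact absurd h hivb
  have hz : r1 - r2 = 0 := by rw [hr13, hr23]; ring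
  rw [hz, zero_mul] at e12
  exact ht e12.symm

lemma smul_Dl0 {t : ℝ} :
    convexHull ℝ {t • pp1 a b, t • pp2 a b, t • (pp1 a b + pp2 a b)} = t • Dl0 a b := by
  rw [Dl0, ← convexHull_smul]
  congr 1
  rw [Set.smul_set_insert, Set.smul_set_insert, Set.smul_set_singleton]


lemma Dl0_compact : IsCompact (Dl0 a b) :=
  Set.Finite.isCompact_convexHull (𝕜 := ℝ) (((Set.finite_singleton _).insert _).insert _)

include hD in
lemma Dl0_vol_pos : 0 < volume (Dl0 a b) := by
  have hU1 : IsOpen {z : E2 | (inner ℝ z a : ℝ) < 1} :=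
    isOpen_lt (inner_cont a) continuous_const
  have hU2 : IsOpen {z : E2 | (inner ℝ z b : ℝ) < 1} :=
    isOpen_lt (inner_cont b) continuous_const
  have hU3 : IsOpen {z : E2 | (1:ℝ) < (inner ℝ z a : ℝ) + inner ℝ z b} :=
    isOpen_lt continuous_const ((inner_cont a).add (inner_cont b))
  have hU : IsOpen ({z : E2 | (inner ℝ z a : ℝ) < 1} ∩
      ({z : E2 | (inner ℝ z b : ℝ) < 1} ∩ {z : E2 | (1:ℝ) < (inner ℝ z a : ℝ) + inner ℝ z b})) :=
    hU1.inter (hU2.inter hU3)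
  have h1a := ip1a a b hD; have h1b := ip1b a b hD
  have h2a := ip2a a b hD; have h2b := ip2b a b hD
  set z0 : E2 := (0.9:ℝ) • pp1 a b + (0.9:ℝ) • pp2 a b with hz0
  have hz0a : (inner ℝ z0 a : ℝ) = 0.9 := by
    rw [hz0, inner_add_left, real_inner_smul_left, real_inner_smul_left, h1a, h2a]; ring
  have hz0b : (inner ℝ z0 b : ℝ) = 0.9 := by
    rw [hz0, inner_add_left, real_inner_smul_left, real_inner_smul_left, h1b, h2b]; ring
  have hz0U : z0 ∈ ({z : E2 | (inner ℝ z a : ℝ) < 1} ∩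
      ({z : E2 | (inner ℝ z b : ℝ) < 1} ∩ {z : E2 | (1:ℝ) < (inner ℝ z a : ℝ) + inner ℝ z b})) := by
    refine ⟨?_, ?_, ?_⟩
    · show (inner ℝ z0 a : ℝ) < 1; rw [hz0a]; norm_num
    · show (inner ℝ z0 b : ℝ) < 1; rw [hz0b]; norm_num
    · show (1:ℝ) < (inner ℝ z0 a : ℝ) + inner ℝ z0 b; rw [hz0a, hz0b]; norm_num
  have hsub : ({z : E2 | (inner ℝ z a : ℝ) < 1} ∩
      ({z : E2 | (inner ℝ z b : ℝ) < 1} ∩ {z : E2 | (1:ℝ) < (inner ℝ z a : ℝ) + inner ℝ z b}))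
      ⊆ Dl0 a b := by
    rw [Dl0_eq_Tset a b hD]
    rintro z ⟨h1, h2, h3⟩
    exact ⟨le_of_lt h1, le_of_lt h2, by simp only [Set.mem_setOf_eq] at h3; linarith⟩
  calc 0 < volume ({z : E2 | (inner ℝ z a : ℝ) < 1} ∩
      ({z : E2 | (inner ℝ z b : ℝ) < 1} ∩ {z : E2 | (1:ℝ) < (inner ℝ z a : ℝ) + inner ℝ z b})) :=
        hU.measure_pos volume ⟨z0, hz0U⟩
    _ ≤ volume (Dl0 a b) := measure_mono hsub

omit hD in
lemma exists_inner_eq (u v : E2) (huv : Dt u v ≠ 0) (α β : ℝ) :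
    ∃ w : E2, (inner ℝ w u : ℝ) = α ∧ (inner ℝ w v : ℝ) = β := by
  have huv' : u 0 * v 1 - u 1 * v 0 ≠ 0 := huv
  refine ⟨!₂[(α * v 1 - β * u 1)/Dt u v, (β * u 0 - α * v 0)/Dt u v], ?_, ?_⟩
  · rw [inner_formula]
    show (α * v 1 - β * u 1)/Dt u v * u 0 + (β * u 0 - α * v 0)/Dt u v * u 1 = α
    unfold Dt; rw [div_mul_eq_mul_div, div_mul_eq_mul_div, ← add_div, div_eq_iff huv']; ring
  · rw [inner_formula]
    show (α * v 1 - β * u 1)/Dt u v * v 0 + (β * u 0 - α * v 0)/Dt u v * v 1 = β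
    unfold Dt; rw [div_mul_eq_mul_div, div_mul_eq_mul_div, ← add_div, div_eq_iff huv']; ring

omit hD in
lemma pair_bound (u v : E2) (huv : Dt u v ≠ 0) (c d : ℝ) :
    ∃ C : ℝ≥0∞, C ≠ ⊤ ∧ ∀ α β : ℝ,
      volume {z : E2 | (α ≤ (inner ℝ z u : ℝ) ∧ (inner ℝ z u : ℝ) ≤ α + c) ∧
        (β ≤ (inner ℝ z v : ℝ) ∧ (inner ℝ z v : ℝ) ≤ β + d)} ≤ C := by
  have hDpos : (0:ℝ) < |Dt u v| := abs_pos.2 huv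
  set ρ : ℝ := (|c| * |v 1| + |d| * |u 1|) / |Dt u v|
    + (|d| * |u 0| + |c| * |v 0|) / |Dt u v| + 1 with hρ
  refine ⟨volume (Metric.closedBall (0:E2) ρ), measure_closedBall_lt_top.ne, ?_⟩
  intro α β
  obtain ⟨w, hwu, hwv⟩ := exists_inner_eq u v huv α β
  have hsub : {z : E2 | (α ≤ (inner ℝ z u : ℝ) ∧ (inner ℝ z u : ℝ) ≤ α + c) ∧
      (β ≤ (inner ℝ z v : ℝ) ∧ (inner ℝ z v : ℝ) ≤ β + d)} ⊆ w +ᵥ Metric.closedBall (0:E2) ρ := by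
    rintro z ⟨⟨hz1, hz2⟩, hz3, hz4⟩
    refine ⟨z - w, ?_, by show w + (z - w) = z; abel⟩
    rw [Metric.mem_closedBall, dist_zero_right]
    set y : E2 := z - w with hy
    have hyu : (inner ℝ y u : ℝ) = inner ℝ z u - α := by rw [hy, inner_sub_left, hwu]
    have hyv : (inner ℝ y v : ℝ) = inner ℝ z v - β := by rw [hy, inner_sub_left, hwv]
    have hyu0 : (0:ℝ) ≤ inner ℝ y u := by rw [hyu]; linarith
    have hyuc : (inner ℝ y u : ℝ) ≤ c := by rw [hyu]; linarith
    have hyv0 : (0:ℝ) ≤ inner ℝ y v := by rw [hyv]; linarith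
    have hyvd : (inner ℝ y v : ℝ) ≤ d := by rw [hyv]; linarith
    have hiu : (inner ℝ y u : ℝ) = y 0 * u 0 + y 1 * u 1 := inner_formula y u
    have hiv : (inner ℝ y v : ℝ) = y 0 * v 0 + y 1 * v 1 := inner_formula y v
    have hy0 : y 0 * Dt u v = (inner ℝ y u : ℝ) * v 1 - (inner ℝ y v : ℝ) * u 1 := by
      rw [hiu, hiv]; unfold Dt; ring
    have hy1 : y 1 * Dt u v = (inner ℝ y v : ℝ) * u 0 - (inner ℝ y u : ℝ) * v 0 := by
      rw [hiu, hiv]; unfold Dt; ring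
    have habs0 : |y 0| * |Dt u v| ≤ |c| * |v 1| + |d| * |u 1| := by
      rw [← abs_mul, hy0]
      calc |(inner ℝ y u : ℝ) * v 1 - (inner ℝ y v : ℝ) * u 1|
          ≤ |(inner ℝ y u : ℝ) * v 1| + |(inner ℝ y v : ℝ) * u 1| := abs_sub _ _
        _ = |(inner ℝ y u : ℝ)| * |v 1| + |(inner ℝ y v : ℝ)| * |u 1| := by
            rw [abs_mul, abs_mul]
        _ ≤ |c| * |v 1| + |d| * |u 1| := by
            have e1 : |(inner ℝ y u : ℝ)| ≤ |c| := by
              rw [abs_of_nonneg hyu0]; exact le_trans hyuc (le_abs_self c)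
            have e2 : |(inner ℝ y v : ℝ)| ≤ |d| := by
              rw [abs_of_nonneg hyv0]; exact le_trans hyvd (le_abs_self d)
            have := mul_le_mul_of_nonneg_right e1 (abs_nonneg (v 1))
            have := mul_le_mul_of_nonneg_right e2 (abs_nonneg (u 1))
            linarith
    have habs1 : |y 1| * |Dt u v| ≤ |d| * |u 0| + |c| * |v 0| := by
      rw [← abs_mul, hy1]
      calc |(inner ℝ y v : ℝ) * u 0 - (inner ℝ y u : ℝ) * v 0|
          ≤ |(inner ℝ y v : ℝ) * u 0| + |(inner ℝ y u : ℝ) * v 0| := abs_sub _ _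
        _ = |(inner ℝ y v : ℝ)| * |u 0| + |(inner ℝ y u : ℝ)| * |v 0| := by
            rw [abs_mul, abs_mul]
        _ ≤ |d| * |u 0| + |c| * |v 0| := by
            have e1 : |(inner ℝ y u : ℝ)| ≤ |c| := by
              rw [abs_of_nonneg hyu0]; exact le_trans hyuc (le_abs_self c)
            have e2 : |(inner ℝ y v : ℝ)| ≤ |d| := by
              rw [abs_of_nonneg hyv0]; exact le_trans hyvd (le_abs_self d)
            have := mul_le_mul_of_nonneg_right e1 (abs_nonneg (v 0))
            have := mul_le_mul_of_nonneg_right e2 (abs_nonneg (u 0))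
            linarith
    have hb0 : |y 0| ≤ (|c| * |v 1| + |d| * |u 1|) / |Dt u v| :=
      (le_div_iff₀ hDpos).2 habs0
    have hb1 : |y 1| ≤ (|d| * |u 0| + |c| * |v 0|) / |Dt u v| :=
      (le_div_iff₀ hDpos).2 habs1
    have hnorm : ‖y‖ ≤ |y 0| + |y 1| := by
      rw [EuclideanSpace.norm_eq, Fin.sum_univ_two, Real.norm_eq_abs, Real.norm_eq_abs]
      have h2 : |y 0| ^ 2 + |y 1| ^ 2 ≤ (|y 0| + |y 1|) ^ 2 := by
        nlinarith [abs_nonneg (y 0), abs_nonneg (y 1)]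
      calc Real.sqrt (|y 0| ^ 2 + |y 1| ^ 2) ≤ Real.sqrt ((|y 0| + |y 1|) ^ 2) :=
            Real.sqrt_le_sqrt h2
        _ = |y 0| + |y 1| := Real.sqrt_sq (by positivity)
    rw [hρ]
    linarith
  calc volume {z : E2 | (α ≤ (inner ℝ z u : ℝ) ∧ (inner ℝ z u : ℝ) ≤ α + c) ∧
        (β ≤ (inner ℝ z v : ℝ) ∧ (inner ℝ z v : ℝ) ≤ β + d)}
      ≤ volume (w +ᵥ Metric.closedBall (0:E2) ρ) := measure_mono hsub
    _ = volume (Metric.closedBall (0:E2) ρ) := measure_vadd _ _ _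

include hD in
lemma upper_incl {X : Set E2} (hX : IsCompact X) (hXne : X.Nonempty) {t : ℝ} (ht : 0 ≤ t) :
    X + t • Dl0 a b ⊆
      Tset a b (t + hsup X a) (t + hsup X b) (-t + hsup X (-(a+b))) := by
  rintro z ⟨x, hx, w, hw, rfl⟩
  obtain ⟨δ, hδ, rfl⟩ := hw
  rw [Dl0_eq_Tset a b hD] at hδ
  obtain ⟨hδ1, hδ2, hδ3⟩ := hδ
  have hδ3' : (1:ℝ) ≤ (inner ℝ δ a : ℝ) + inner ℝ δ b := by
    have : -(-1:ℝ) = 1 := by norm_num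
    linarith [hδ3]
  have hxa : (inner ℝ x a : ℝ) ≤ hsup X a := le_hsup hX hXne hx a
  have hxb : (inner ℝ x b : ℝ) ≤ hsup X b := le_hsup hX hXne hx b
  have hxc : (inner ℝ x (-(a+b)) : ℝ) ≤ hsup X (-(a+b)) := le_hsup hX hXne hx _
  have hxc' : -((inner ℝ x a : ℝ) + inner ℝ x b) ≤ hsup X (-(a+b)) := by
    rw [inner_neg_right, inner_add_right] at hxc
    linarith
  have ea : (inner ℝ (x + t • δ) a : ℝ) = inner ℝ x a + t * inner ℝ δ a := by
    rw [inner_add_left, real_inner_smul_left]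
  have eb : (inner ℝ (x + t • δ) b : ℝ) = inner ℝ x b + t * inner ℝ δ b := by
    rw [inner_add_left, real_inner_smul_left]
  refine ⟨?_, ?_, ?_⟩
  · rw [ea]
    have := mul_le_mul_of_nonneg_left hδ1 ht
    linarith
  · rw [eb]
    have := mul_le_mul_of_nonneg_left hδ2 ht
    linarith
  · rw [ea, eb]
    have := mul_le_mul_of_nonneg_left hδ3' ht
    rw [mul_add] at this
    linarith

include hD in
lemma lower_est {X : Set E2} (hX : IsCompact X) (hXne : X.Nonempty) :
    ∃ C : ℝ≥0∞, C ≠ ⊤ ∧ ∀ t : ℝ, 1 ≤ t →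
      volume (Tset a b (t + hsup X a) (t + hsup X b) (-t + hsup X (-(a+b))))
        ≤ volume (X + t • Dl0 a b) + C := by
  obtain ⟨s1, hs1, hs1e⟩ := hsup_attained hX hXne a
  obtain ⟨s2, hs2, hs2e⟩ := hsup_attained hX hXne b
  obtain ⟨s3, hs3, hs3e⟩ := hsup_attained hX hXne (-(a+b))
  set m1 : ℝ := min (min (inner ℝ s1 a) (inner ℝ s2 a)) (inner ℝ s3 a) with hm1
  set m2 : ℝ := min (min (inner ℝ s1 b) (inner ℝ s2 b)) (inner ℝ s3 b) with hm2
  set m3 : ℝ := min (min (inner ℝ s1 (-(a+b))) (inner ℝ s2 (-(a+b)))) (inner ℝ s3 (-(a+b))) with hm3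
  have hw3a : Dt a (-(a+b)) ≠ 0 := by
    have e : Dt a (-(a+b)) = -Dt a b := by
      show a 0 * (-(a+b)) 1 - a 1 * (-(a+b)) 0 = -(a 0 * b 1 - a 1 * b 0)
      have e1 : (-(a+b)) 1 = -(a 1 + b 1) := rfl
      have e0 : (-(a+b)) 0 = -(a 0 + b 0) := rfl
      rw [e1, e0]; ring
    rw [e]
    exact neg_ne_zero.2 hD
  have hw3b : Dt b (-(a+b)) ≠ 0 := by
    have e : Dt b (-(a+b)) = Dt a b := by
      show b 0 * (-(a+b)) 1 - b 1 * (-(a+b)) 0 = a 0 * b 1 - a 1 * b 0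
      have e1 : (-(a+b)) 1 = -(a 1 + b 1) := rfl
      have e0 : (-(a+b)) 0 = -(a 0 + b 0) := rfl
      rw [e1, e0]; ring
    rw [e]; exact hD
  obtain ⟨C12, hC12top, hC12⟩ := pair_bound a b hD (hsup X a - m1) (hsup X b - m2)
  obtain ⟨C13, hC13top, hC13⟩ := pair_bound a (-(a+b)) hw3a (hsup X a - m1) (hsup X (-(a+b)) - m3)
  obtain ⟨C23, hC23top, hC23⟩ := pair_bound b (-(a+b)) hw3b (hsup X b - m2) (hsup X (-(a+b)) - m3)
  refine ⟨C12 + (C13 + C23),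
    ENNReal.add_ne_top.2 ⟨hC12top, ENNReal.add_ne_top.2 ⟨hC13top, hC23top⟩⟩, ?_⟩
  intro t ht
  have ht0 : (0:ℝ) < t := by linarith
  set S12 : Set E2 := {z : E2 | ((t + m1) ≤ (inner ℝ z a : ℝ) ∧ (inner ℝ z a : ℝ) ≤ (t + m1) + (hsup X a - m1)) ∧
    ((t + m2) ≤ (inner ℝ z b : ℝ) ∧ (inner ℝ z b : ℝ) ≤ (t + m2) + (hsup X b - m2))} with hS12
  set S13 : Set E2 := {z : E2 | ((t + m1) ≤ (inner ℝ z a : ℝ) ∧ (inner ℝ z a : ℝ) ≤ (t + m1) + (hsup X a - m1)) ∧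
    ((-t + m3) ≤ (inner ℝ z (-(a+b)) : ℝ) ∧ (inner ℝ z (-(a+b)) : ℝ) ≤ (-t + m3) + (hsup X (-(a+b)) - m3))} with hS13
  set S23 : Set E2 := {z : E2 | ((t + m2) ≤ (inner ℝ z b : ℝ) ∧ (inner ℝ z b : ℝ) ≤ (t + m2) + (hsup X b - m2)) ∧
    ((-t + m3) ≤ (inner ℝ z (-(a+b)) : ℝ) ∧ (inner ℝ z (-(a+b)) : ℝ) ≤ (-t + m3) + (hsup X (-(a+b)) - m3))} with hS23
  have hcover : Tset a b (t + hsup X a) (t + hsup X b) (-t + hsup X (-(a+b)))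
      ⊆ (X + t • Dl0 a b) ∪ (S12 ∪ (S13 ∪ S23)) := by
    intro z hz
    obtain ⟨hz1, hz2, hz3⟩ := hz
    by_cases hmem : z ∈ X + t • Dl0 a b
    · exact Or.inl hmem
    right
    have hzw3 : (inner ℝ z (-(a+b)) : ℝ) = -((inner ℝ z a : ℝ) + inner ℝ z b) := by
      rw [inner_neg_right, inner_add_right]
    have hz3w : (inner ℝ z (-(a+b)) : ℝ) ≤ -t + hsup X (-(a+b)) := by
      rw [hzw3]; linarith
    have hnot : ∀ s ∈ X, ¬ (z - s ∈ Tset a b t t (-t)) := by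
      intro s hs hmem'
      apply hmem
      have h1 : z - s ∈ t • Dl0 a b := by
        rw [Dl0_eq_Tset a b hD, Tset_smul a b ht0]
        exact hmem'
      exact ⟨s, hs, z - s, h1, by module⟩
    -- min facts
    have q1a : m1 ≤ (inner ℝ s1 a : ℝ) := min_le_of_left_le (min_le_left _ _)
    have q2a : m1 ≤ (inner ℝ s2 a : ℝ) := min_le_of_left_le (min_le_right _ _)
    have q3a : m1 ≤ (inner ℝ s3 a : ℝ) := min_le_right _ _
    have q1b : m2 ≤ (inner ℝ s1 b : ℝ) := min_le_of_left_le (min_le_left _ _)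
    have q2b : m2 ≤ (inner ℝ s2 b : ℝ) := min_le_of_left_le (min_le_right _ _)
    have q3b : m2 ≤ (inner ℝ s3 b : ℝ) := min_le_right _ _
    have q1c : m3 ≤ (inner ℝ s1 (-(a+b)) : ℝ) := min_le_of_left_le (min_le_left _ _)
    have q2c : m3 ≤ (inner ℝ s2 (-(a+b)) : ℝ) := min_le_of_left_le (min_le_right _ _)
    have q3c : m3 ≤ (inner ℝ s3 (-(a+b)) : ℝ) := min_le_right _ _
    have P1 := fun (s : E2) (qa : m1 ≤ (inner ℝ s a : ℝ)) (hgt : t < (inner ℝ (z - s) a : ℝ)) =>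
      show (t + m1) ≤ (inner ℝ z a : ℝ) ∧ (inner ℝ z a : ℝ) ≤ (t + m1) + (hsup X a - m1) from by
        rw [inner_sub_left] at hgt
        exact ⟨by linarith, by linarith⟩
    have P2 := fun (s : E2) (qb : m2 ≤ (inner ℝ s b : ℝ)) (hgt : t < (inner ℝ (z - s) b : ℝ)) =>
      show (t + m2) ≤ (inner ℝ z b : ℝ) ∧ (inner ℝ z b : ℝ) ≤ (t + m2) + (hsup X b - m2) from by
        rw [inner_sub_left] at hgt
        exact ⟨by linarith, by linarith⟩
    have P3 := fun (s : E2) (qc : m3 ≤ (inner ℝ s (-(a+b)) : ℝ))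
        (hgt : (inner ℝ (z - s) a : ℝ) + (inner ℝ (z - s) b : ℝ) < - -t) =>
      show (-t + m3) ≤ (inner ℝ z (-(a+b)) : ℝ) ∧
          (inner ℝ z (-(a+b)) : ℝ) ≤ (-t + m3) + (hsup X (-(a+b)) - m3) from by
        rw [inner_sub_left, inner_sub_left] at hgt
        have hsw : (inner ℝ s (-(a+b)) : ℝ) = -((inner ℝ s a : ℝ) + inner ℝ s b) := by
          rw [inner_neg_right, inner_add_right]
        have hne : - -t = t := neg_neg t
        rw [hne] at hgt
        refine ⟨?_, by linarith⟩
        rw [hzw3]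
        rw [hsw] at qc
        linarith
    have mkfail : ∀ s ∈ X, ¬((inner ℝ (z-s) a : ℝ) ≤ t) ∨ ¬((inner ℝ (z-s) b : ℝ) ≤ t) ∨
        ¬(- -t ≤ (inner ℝ (z-s) a : ℝ) + (inner ℝ (z-s) b : ℝ)) := by
      intro s hs
      have hfail := hnot s hs
      rw [Tset, Set.mem_setOf_eq] at hfail
      tauto
    have d1 : ((t + m2) ≤ (inner ℝ z b : ℝ) ∧ (inner ℝ z b : ℝ) ≤ (t + m2) + (hsup X b - m2)) ∨
        ((-t + m3) ≤ (inner ℝ z (-(a+b)) : ℝ) ∧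
          (inner ℝ z (-(a+b)) : ℝ) ≤ (-t + m3) + (hsup X (-(a+b)) - m3)) := by
      rcases mkfail s1 hs1 with hf | hf | hf
      · exfalso
        rw [not_le, inner_sub_left, hs1e] at hf
        linarith
      · exact Or.inl (P2 s1 q1b (not_le.1 hf))
      · exact Or.inr (P3 s1 q1c (not_le.1 hf))
    have d2 : ((t + m1) ≤ (inner ℝ z a : ℝ) ∧ (inner ℝ z a : ℝ) ≤ (t + m1) + (hsup X a - m1)) ∨
        ((-t + m3) ≤ (inner ℝ z (-(a+b)) : ℝ) ∧
          (inner ℝ z (-(a+b)) : ℝ) ≤ (-t + m3) + (hsup X (-(a+b)) - m3)) := by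
      rcases mkfail s2 hs2 with hf | hf | hf
      · exact Or.inl (P1 s2 q2a (not_le.1 hf))
      · exfalso
        rw [not_le, inner_sub_left, hs2e] at hf
        linarith
      · exact Or.inr (P3 s2 q2c (not_le.1 hf))
    have d3 : ((t + m1) ≤ (inner ℝ z a : ℝ) ∧ (inner ℝ z a : ℝ) ≤ (t + m1) + (hsup X a - m1)) ∨
        ((t + m2) ≤ (inner ℝ z b : ℝ) ∧ (inner ℝ z b : ℝ) ≤ (t + m2) + (hsup X b - m2)) := by
      rcases mkfail s3 hs3 with hf | hf | hf
      · exact Or.inl (P1 s3 q3a (not_le.1 hf))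
      · exact Or.inr (P2 s3 q3b (not_le.1 hf))
      · exfalso
        rw [not_le, inner_sub_left, inner_sub_left] at hf
        have hne : - -t = t := neg_neg t
        rw [hne] at hf
        have hsw : (inner ℝ s3 (-(a+b)) : ℝ) = -((inner ℝ s3 a : ℝ) + inner ℝ s3 b) := by
          rw [inner_neg_right, inner_add_right]
        rw [hsw] at hs3e
        rw [hzw3] at hz3w
        linarith
    rcases d1 with p2 | p3
    · rcases d2 with p1 | p3'
      · exact Or.inl ⟨p1, p2⟩
      · exact Or.inr (Or.inr ⟨p2, p3'⟩)
    · rcases d2 with p1 | p3'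
      · exact Or.inr (Or.inl ⟨p1, p3⟩)
      · rcases d3 with p1' | p2'
        · exact Or.inr (Or.inl ⟨p1', p3⟩)
        · exact Or.inr (Or.inr ⟨p2', p3⟩)
  calc volume (Tset a b (t + hsup X a) (t + hsup X b) (-t + hsup X (-(a+b))))
      ≤ volume ((X + t • Dl0 a b) ∪ (S12 ∪ (S13 ∪ S23))) := measure_mono hcover
    _ ≤ volume (X + t • Dl0 a b) + volume (S12 ∪ (S13 ∪ S23)) := measure_union_le _ _
    _ ≤ volume (X + t • Dl0 a b) + (volume S12 + (volume S13 + volume S23)) := by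
        refine add_le_add_right ?_ _
        calc volume (S12 ∪ (S13 ∪ S23)) ≤ volume S12 + volume (S13 ∪ S23) :=
              measure_union_le _ _
          _ ≤ volume S12 + (volume S13 + volume S23) :=
              add_le_add_right (measure_union_le _ _) _
    _ ≤ volume (X + t • Dl0 a b) + (C12 + (C13 + C23)) := by
        refine add_le_add_right ?_ _
        exact add_le_add (hC12 (t+m1) (t+m2))
          (add_le_add (hC13 (t+m1) (-t+m3)) (hC23 (t+m2) (-t+m3)))


lemma Dl0_smul_compact (t : ℝ) : IsCompact (t • Dl0 a b) := by
  rw [← Set.image_smul]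
  exact (Dl0_compact a b).image (continuous_const_smul t)

omit hD in
lemma sum_hsup_nonneg {X : Set E2} (hX : IsCompact X) (hXne : X.Nonempty) :
    0 ≤ hsup X a + hsup X b + hsup X (-(a+b)) := by
  obtain ⟨x, hx⟩ := hXne
  have h1 := le_hsup hX ⟨x, hx⟩ hx a
  have h2 := le_hsup hX ⟨x, hx⟩ hx b
  have h3 := le_hsup hX ⟨x, hx⟩ hx (-(a+b))
  have e : (inner ℝ x (-(a+b)) : ℝ) = -((inner ℝ x a : ℝ) + inner ℝ x b) := by
    rw [inner_neg_right, inner_add_right]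
  rw [e] at h3
  linarith

include hD in
lemma pair_relation {K L : Set E2} (hK : IsCompact K) (hKne : K.Nonempty)
    (hL : IsCompact L) (hLne : L.Nonempty)
    (hvol : ∀ t : ℝ, 1 ≤ t →
      (volume (K + t • Dl0 a b)).toReal - (volume (L + t • Dl0 a b)).toReal
        = (volume K).toReal - (volume L).toReal) :
    hsup K a + hsup K b + hsup K (-(a+b)) = hsup L a + hsup L b + hsup L (-(a+b)) := by
  set SK := hsup K a + hsup K b + hsup K (-(a+b)) with hSK
  set SL := hsup L a + hsup L b + hsup L (-(a+b)) with hSL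
  have hSKnn : 0 ≤ SK := sum_hsup_nonneg a b hK hKne
  have hSLnn : 0 ≤ SL := sum_hsup_nonneg a b hL hLne
  have hV0pos : 0 < volume (Dl0 a b) := Dl0_vol_pos a b hD
  have hV0top : volume (Dl0 a b) ≠ ⊤ := (Dl0_compact a b).measure_lt_top.ne
  set W := (volume (Dl0 a b)).toReal with hW
  have hWpos : 0 < W := ENNReal.toReal_pos hV0pos.ne' hV0top
  obtain ⟨CK, hCKtop, hCK⟩ := lower_est a b hD hK hKne
  obtain ⟨CL, hCLtop, hCL⟩ := lower_est a b hD hL hLne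
  set CKr := CK.toReal with hCKr
  set CLr := CL.toReal with hCLr
  have hCKrnn : 0 ≤ CKr := ENNReal.toReal_nonneg
  have hCLrnn : 0 ≤ CLr := ENNReal.toReal_nonneg
  set c0 := (volume K).toReal - (volume L).toReal with hc0
  -- main bounds for any t ≥ 1 and any X ∈ {K, L}
  have main : ∀ (X : Set E2), IsCompact X → X.Nonempty →
      ∀ (CX : ℝ≥0∞), CX ≠ ⊤ →
      (∀ t : ℝ, 1 ≤ t →
        volume (Tset a b (t + hsup X a) (t + hsup X b) (-t + hsup X (-(a+b))))
          ≤ volume (X + t • Dl0 a b) + CX) →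
      ∀ t : ℝ, 1 ≤ t →
        (volume (X + t • Dl0 a b)).toReal ≤ (t + (hsup X a + hsup X b + hsup X (-(a+b))))^2 * W ∧
        (t + (hsup X a + hsup X b + hsup X (-(a+b))))^2 * W ≤ (volume (X + t • Dl0 a b)).toReal + CX.toReal := by
    intro X hX hXne CX hCXtop hCX t ht
    have ht0 : (0:ℝ) ≤ t := by linarith
    have hSXnn : 0 ≤ hsup X a + hsup X b + hsup X (-(a+b)) := sum_hsup_nonneg a b hX hXne
    have hσ : 0 < (t + hsup X a) + (t + hsup X b) + (-t + hsup X (-(a+b))) := by linarith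
    have hvolT := vol_Tset a b hD (t + hsup X a) (t + hsup X b) (-t + hsup X (-(a+b))) hσ
    have hsum : (t + hsup X a) + (t + hsup X b) + (-t + hsup X (-(a+b)))
        = t + (hsup X a + hsup X b + hsup X (-(a+b))) := by ring
    rw [hsum] at hvolT
    have hXcomp : IsCompact (X + t • Dl0 a b) := hX.add (Dl0_smul_compact a b t)
    have hXfin : volume (X + t • Dl0 a b) ≠ ⊤ := hXcomp.measure_lt_top.ne
    have hTfin : ENNReal.ofReal ((t + (hsup X a + hsup X b + hsup X (-(a+b))))^2)
        * volume (Dl0 a b) ≠ ⊤ := ENNReal.mul_ne_top ENNReal.ofReal_ne_top hV0top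
    constructor
    · have h1 : volume (X + t • Dl0 a b)
          ≤ ENNReal.ofReal ((t + (hsup X a + hsup X b + hsup X (-(a+b))))^2) * volume (Dl0 a b) := by
        rw [← hvolT]
        exact measure_mono (upper_incl a b hD hX hXne ht0)
      have h2 := ENNReal.toReal_mono hTfin h1
      rw [ENNReal.toReal_mul, ENNReal.toReal_ofReal (by positivity)] at h2
      exact h2
    · have h1 : ENNReal.ofReal ((t + (hsup X a + hsup X b + hsup X (-(a+b))))^2) * volume (Dl0 a b)
          ≤ volume (X + t • Dl0 a b) + CX := by
        rw [← hvolT]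
        exact hCX t ht
      have hRfin : volume (X + t • Dl0 a b) + CX ≠ ⊤ := ENNReal.add_ne_top.2 ⟨hXfin, hCXtop⟩
      have h2 := ENNReal.toReal_mono hRfin h1
      rw [ENNReal.toReal_mul, ENNReal.toReal_ofReal (by positivity),
        ENNReal.toReal_add hXfin hCXtop] at h2
      exact h2
  have mainK := main K hK hKne CK hCKtop hCK
  have mainL := main L hL hLne CL hCLtop hCL
  -- combined two-sided bound
  have bound : ∀ t : ℝ, 1 ≤ t →
      c0 - CLr ≤ (SK - SL) * (2*t + SK + SL) * W ∧
      (SK - SL) * (2*t + SK + SL) * W ≤ c0 + CKr := by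
    intro t ht
    obtain ⟨hKu, hKl⟩ := mainK t ht
    obtain ⟨hLu, hLl⟩ := mainL t ht
    rw [← hSK] at hKu hKl
    rw [← hSL] at hLu hLl
    have hdiff := hvol t ht
    have he : (t + SK)^2 * W - (t + SL)^2 * W = (SK - SL) * (2*t + SK + SL) * W := by ring
    constructor
    · linarith
    · linarith
  by_contra hne
  have hdne : SK - SL ≠ 0 := sub_ne_zero.2 hne
  have habs : 0 < |SK - SL| := abs_pos.2 hdne
  set Q := |c0| + CKr + CLr + 1 with hQ
  have hQpos : 0 < Q := by
    have := abs_nonneg c0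
    linarith
  set tstar := Q / (|SK - SL| * W) + |SK| + |SL| + 1 with htstar
  have htnn : 0 ≤ Q / (|SK - SL| * W) := div_nonneg (le_of_lt hQpos) (by positivity)
  have ht1 : 1 ≤ tstar := by
    have := abs_nonneg SK
    have := abs_nonneg SL
    rw [htstar]; linarith
  obtain ⟨hB2, hB1⟩ := bound tstar ht1
  have hts : 0 ≤ tstar + SK + SL := by
    have h1 := neg_abs_le SK
    have h2 := neg_abs_le SL
    rw [htstar]; linarith
  have hts2 : tstar ≤ 2*tstar + SK + SL := by linarith
  have hfield : (|SK - SL| * W) * (Q / (|SK - SL| * W)) = Q := by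
    field_simp
  have hge : Q ≤ |SK - SL| * tstar * W := by
    have h1 : (|SK - SL| * W) * (Q / (|SK - SL| * W)) ≤ (|SK - SL| * W) * tstar := by
      apply mul_le_mul_of_nonneg_left _ (by positivity)
      rw [htstar]
      have := abs_nonneg SK
      have := abs_nonneg SL
      linarith
    rw [hfield] at h1
    have hid : (|SK - SL| * W) * tstar = |SK - SL| * tstar * W := by ring
    linarith
  rcases lt_or_gt_of_ne hdne with hdneg | hdpos
  · -- SK - SL < 0 : use lower bound hB2
    have step : (SK - SL) * (2*tstar + SK + SL) * W ≤ (SK - SL) * tstar * W := by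
      have hid : (SK - SL) * tstar * W - (SK - SL) * (2*tstar+SK+SL) * W
          = (SL - SK) * ((tstar+SK+SL) * W) := by ring
      have hnn : 0 ≤ (SL - SK) * ((tstar+SK+SL)*W) :=
        mul_nonneg (by linarith) (mul_nonneg hts (le_of_lt hWpos))
      linarith
    have habs2 : |SK - SL| = -(SK - SL) := abs_of_neg hdneg
    have step2 : (SK - SL) * tstar * W ≤ -Q := by
      have h1 : Q ≤ -(SK - SL) * tstar * W := by rw [← habs2]; exact hge
      have hid : -(SK - SL) * tstar * W = -((SK - SL) * tstar * W) := by ring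
      linarith
    have := neg_abs_le c0
    linarith
  · -- SK - SL > 0 : use upper bound hB1
    have step : (SK - SL) * tstar * W ≤ (SK - SL) * (2*tstar + SK + SL) * W := by
      have hid : (SK - SL) * (2*tstar+SK+SL) * W - (SK - SL) * tstar * W
          = (SK - SL) * ((tstar+SK+SL) * W) := by ring
      have hnn : 0 ≤ (SK - SL) * ((tstar+SK+SL)*W) :=
        mul_nonneg (by linarith) (mul_nonneg hts (le_of_lt hWpos))
      linarith
    have habs2 : |SK - SL| = SK - SL := abs_of_pos hdpos
    have step2 : Q ≤ (SK - SL) * tstar * W := by rw [← habs2]; exact hge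
    have := le_abs_self c0
    linarith

end Geometry

theorem equal_mixed_areas_with_triangles_implies_translates
    (K L : Set (EuclideanSpace ℝ (Fin 2)))
    (hK : IsCompact K) (hKc : Convex ℝ K) (hKne : K.Nonempty)
    (hL : IsCompact L) (hLc : Convex ℝ L) (hLne : L.Nonempty)
    (h : ∀ p q r : EuclideanSpace ℝ (Fin 2), AffineIndependent ℝ ![p, q, r] →
      (volume (K + convexHull ℝ {p, q, r})).toReal - (volume K).toReal
          - (volume (convexHull ℝ {p, q, r} : Set (EuclideanSpace ℝ (Fin 2)))).toReal =
        (volume (L + convexHull ℝ {p, q, r})).toReal - (volume L).toReal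
          - (volume (convexHull ℝ {p, q, r} : Set (EuclideanSpace ℝ (Fin 2)))).toReal) :
    ∃ x : EuclideanSpace ℝ (Fin 2), L = K + {x} := by
  -- abbreviation for the difference of support functions
  set gv : E2 → ℝ := fun v => hsup K v - hsup L v with hgv
  -- Main functional relation from the mixed-area hypothesis
  have keyrel : ∀ a b : E2, Dt a b ≠ 0 → gv a + gv b + gv (-(a+b)) = 0 := by
    intro a b hD
    have hvol : ∀ t : ℝ, 1 ≤ t →
        (volume (K + t • Dl0 a b)).toReal - (volume (L + t • Dl0 a b)).toReal
          = (volume K).toReal - (volume L).toReal := by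
      intro t ht
      have haff := affInd a b hD (show t ≠ 0 by intro h0; rw [h0] at ht; linarith)
      have hh := h (t • pp1 a b) (t • pp2 a b) (t • (pp1 a b + pp2 a b)) haff
      rw [smul_Dl0 a b] at hh
      linarith
    have := pair_relation a b hD hK hKne hL hLne hvol
    simp only [hgv]
    linarith
  -- positive homogeneity
  have gsmul : ∀ (v : E2) (α : ℝ), 0 ≤ α → gv (α • v) = α * gv v := by
    intro v α hα
    simp only [hgv]
    rw [hsup_smul hK hKne v hα, hsup_smul hL hLne v hα]
    ring
  -- additivity on independent pairs
  have keyadd : ∀ a b : E2, Dt a b ≠ 0 → gv (a + b) = gv a + gv b := by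
    intro a b hD
    have hD1 : Dt a (a + b) ≠ 0 := by
      have e : Dt a (a + b) = Dt a b := by
        show a 0 * (a+b) 1 - a 1 * (a+b) 0 = a 0 * b 1 - a 1 * b 0
        have e1 : (a+b) 1 = a 1 + b 1 := rfl
        have e0 : (a+b) 0 = a 0 + b 0 := rfl
        rw [e1, e0]; ring
      rw [e]; exact hD
    have hD2 : Dt ((2:ℝ) • a) b ≠ 0 := by
      have e : Dt ((2:ℝ) • a) b = 2 * Dt a b := by
        show ((2:ℝ) • a) 0 * b 1 - ((2:ℝ) • a) 1 * b 0 = 2 * (a 0 * b 1 - a 1 * b 0)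
        have e1 : ((2:ℝ) • a) 1 = 2 * a 1 := rfl
        have e0 : ((2:ℝ) • a) 0 = 2 * a 0 := rfl
        rw [e1, e0]; ring
      rw [e]; exact mul_ne_zero two_ne_zero hD
    have r1 := keyrel a (a + b) hD1
    have r2 := keyrel ((2:ℝ) • a) b hD2
    have hid : -(a + (a + b)) = -((2:ℝ) • a + b) := by module
    rw [hid] at r1
    have h2a : gv ((2:ℝ) • a) = 2 * gv a := gsmul a 2 (by norm_num)
    rw [h2a] at r2
    linarith
  -- negation
  have gneg : ∀ a : E2, a ≠ 0 → gv (-a) = -(gv a) := by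
    intro a ha
    set b : E2 := !₂[-(a 1), a 0] with hb
    have hD : Dt a b ≠ 0 := by
      have e : Dt a b = a 0 ^ 2 + a 1 ^ 2 := by
        show a 0 * b 1 - a 1 * b 0 = a 0 ^ 2 + a 1 ^ 2
        have e1 : b 1 = a 0 := rfl
        have e0 : b 0 = -(a 1) := rfl
        rw [e1, e0]; ring
      rw [e]
      intro hcon
      apply ha
      have h0 : a 0 = 0 := by nlinarith [sq_nonneg (a 0), sq_nonneg (a 1)]
      have h1 : a 1 = 0 := by nlinarith [sq_nonneg (a 0), sq_nonneg (a 1)]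
      ext i; fin_cases i
      · exact h0
      · exact h1
    have hDn : Dt (-(a + b)) b ≠ 0 := by
      have e : Dt (-(a + b)) b = -(Dt a b) := by
        show (-(a+b)) 0 * b 1 - (-(a+b)) 1 * b 0 = -(a 0 * b 1 - a 1 * b 0)
        have e1 : (-(a+b)) 1 = -(a 1 + b 1) := rfl
        have e0 : (-(a+b)) 0 = -(a 0 + b 0) := rfl
        rw [e1, e0]; ring
      rw [e]; exact neg_ne_zero.2 hD
    have r1 := keyrel a b hD
    have r2 := keyadd (-(a + b)) b hDn
    have hid : -(a + b) + b = -a := by module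
    rw [hid] at r2
    linarith
  -- scaling for all reals
  have gscal : ∀ (e : E2), e ≠ 0 → ∀ α : ℝ, gv (α • e) = α * gv e := by
    intro e he α
    rcases le_or_gt 0 α with hα | hα
    · exact gsmul e α hα
    · have hid : α • e = (-α) • (-e) := by module
      rw [hid, gsmul (-e) (-α) (by linarith), gneg e he]
      ring
  -- basis vectors
  set e0 : E2 := EuclideanSpace.single 0 1 with he0
  set e1 : E2 := EuclideanSpace.single 1 1 with he1
  have he0c0 : e0 0 = 1 := by rw [he0]; simp [EuclideanSpace.single_apply]
  have he0c1 : e0 1 = 0 := by rw [he0]; simp [EuclideanSpace.single_apply]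
  have he1c0 : e1 0 = 0 := by rw [he1]; simp [EuclideanSpace.single_apply]
  have he1c1 : e1 1 = 1 := by rw [he1]; simp [EuclideanSpace.single_apply]
  have he0ne : e0 ≠ 0 := by
    intro hcon
    have : e0 0 = 0 := by rw [hcon]; rfl
    rw [he0c0] at this
    exact one_ne_zero this
  have he1ne : e1 ≠ 0 := by
    intro hcon
    have : e1 1 = 0 := by rw [hcon]; rfl
    rw [he1c1] at this
    exact one_ne_zero this
  have hdecomp : ∀ v : E2, v = v 0 • e0 + v 1 • e1 := by
    intro v
    ext i
    fin_cases i
    · show v 0 = (v 0 • e0 + v 1 • e1) 0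
      have : (v 0 • e0 + v 1 • e1) 0 = v 0 * e0 0 + v 1 * e1 0 := rfl
      rw [this, he0c0, he1c0]; ring
    · show v 1 = (v 0 • e0 + v 1 • e1) 1
      have : (v 0 • e0 + v 1 • e1) 1 = v 0 * e0 1 + v 1 * e1 1 := rfl
      rw [this, he0c1, he1c1]; ring
  have hgzero : gv 0 = 0 := by
    simp only [hgv]
    rw [hsup_zero hK hKne, hsup_zero hL hLne]
    ring
  have glin : ∀ v : E2, gv v = v 0 * gv e0 + v 1 * gv e1 := by
    intro v
    by_cases h0 : v 0 = 0
    · by_cases h1 : v 1 = 0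
      · have hv : v = 0 := by
          rw [hdecomp v, h0, h1, zero_smul, zero_smul, add_zero]
        rw [hv, hgzero]
        rw [show (0:E2) 0 = 0 from rfl, show (0:E2) 1 = 0 from rfl]
        ring
      · have hv : v = v 1 • e1 := by
          ext i; fin_cases i
          · show v 0 = (v 1 • e1) 0
            rw [show (v 1 • e1) 0 = v 1 * e1 0 from rfl, he1c0, mul_zero]; exact h0
          · show v 1 = (v 1 • e1) 1
            rw [show (v 1 • e1) 1 = v 1 * e1 1 from rfl, he1c1, mul_one]
        have hc := congrArg gv hv
        rw [hc, gscal e1 he1ne (v 1), h0]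
        ring
    · by_cases h1 : v 1 = 0
      · have hv : v = v 0 • e0 := by
          ext i; fin_cases i
          · show v 0 = (v 0 • e0) 0
            rw [show (v 0 • e0) 0 = v 0 * e0 0 from rfl, he0c0, mul_one]
          · show v 1 = (v 0 • e0) 1
            rw [show (v 0 • e0) 1 = v 0 * e0 1 from rfl, he0c1, mul_zero]; exact h1
        have hc := congrArg gv hv
        rw [hc, gscal e0 he0ne (v 0), h1]
        ring
      · have hDv : Dt (v 0 • e0) (v 1 • e1) ≠ 0 := by
          have e : Dt (v 0 • e0) (v 1 • e1) = v 0 * v 1 := by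
            show (v 0 • e0) 0 * (v 1 • e1) 1 - (v 0 • e0) 1 * (v 1 • e1) 0 = v 0 * v 1
            rw [show (v 0 • e0) 0 = v 0 * e0 0 from rfl, show (v 0 • e0) 1 = v 0 * e0 1 from rfl,
              show (v 1 • e1) 0 = v 1 * e1 0 from rfl, show (v 1 • e1) 1 = v 1 * e1 1 from rfl,
              he0c0, he0c1, he1c0, he1c1]
            ring
          rw [e]; exact mul_ne_zero h0 h1
        have hc := congrArg gv (hdecomp v)
        rw [hc, keyadd _ _ hDv, gscal e0 he0ne (v 0), gscal e1 he1ne (v 1)]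
  -- the translation vector
  set px : E2 := !₂[-(gv e0), -(gv e1)] with hpx
  have hxv : ∀ v : E2, (inner ℝ px v : ℝ) = -(gv v) := by
    intro v
    rw [inner_formula, glin v]
    rw [show px 0 = -(gv e0) from rfl, show px 1 = -(gv e1) from rfl]
    ring
  have hKxc : IsCompact (K + {px}) := hK.add isCompact_singleton
  have hKxne : (K + {px}).Nonempty := hKne.add (Set.singleton_nonempty px)
  have hKxconv : Convex ℝ (K + {px}) := hKc.add (convex_singleton px)
  have hsupEq : ∀ v : E2, hsup (K + {px}) v = hsup L v := by
    intro v
    rw [hsup_translate hK hKne px v, hxv v]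
    simp only [hgv]
    ring
  refine ⟨px, Set.Subset.antisymm ?_ ?_⟩
  · exact subset_of_hsup_le hL hLne hKxc hKxconv hKxne (fun v => (hsupEq v).ge)
  · exact subset_of_hsup_le hKxc hKxne hL hLc hLne (fun v => (hsupEq v).le)
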